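/- Let U ⊆ ℝ² be open with coordinates (t,x), let g : U → ℝ be twice continuously differentiable, let b : U → ℝ be a function and A ∈ ℝ, and assume that ∂ₜg − ∂ₓ²g ≤ b·∂ₓg on U. Define f := (max{g − A, 0})². Then at every point (t,x) ∈ U with g(t,x) ≠ A, the function f is differentiable in t and twice differentiable in x, and satisfies ∂ₜf − ∂ₓ²f ≤ (1/2)·b²·f. -/

import Mathlib

/-- Partial derivative with respect to the first coordinate `t` of a function of `(t,x)`. -/
noncomputable def pdt (g : ℝ × ℝ → ℝ) (p : ℝ × ℝ) : ℝ :=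
  deriv (fun t => g (t, p.2)) p.1

/-- Partial derivative with respect to the second coordinate `x` of a function of `(t,x)`. -/
noncomputable def pdx (g : ℝ × ℝ → ℝ) (p : ℝ × ℝ) : ℝ :=
  deriv (fun x => g (p.1, x)) p.2

/-- If `g` satisfies `∂ₜg − ∂ₓ²g ≤ b·∂ₓg` on an open set `U`, then the squared positive
truncation `f = (max{g − A, 0})²` is, at every point where `g ≠ A`, differentiable in `t` and
twice differentiable in `x`, and satisfies `∂ₜf − ∂ₓ²f ≤ (1/2)·b²·f`. -/
theorem stmt13 (U : Set (ℝ × ℝ)) (hU : IsOpen U) (g b : ℝ × ℝ → ℝ) (A : ℝ)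
    (hg : ContDiffOn ℝ 2 g U)
    (hgineq : ∀ p ∈ U, pdt g p - pdx (pdx g) p ≤ b p * pdx g p) :
    ∀ p ∈ U, g p ≠ A →
      (DifferentiableAt ℝ (fun t => (max (g (t, p.2) - A) 0) ^ 2) p.1 ∧
        DifferentiableAt ℝ (fun x => (max (g (p.1, x) - A) 0) ^ 2) p.2 ∧
        DifferentiableAt ℝ (fun x => pdx (fun q => (max (g q - A) 0) ^ 2) (p.1, x)) p.2) ∧
      pdt (fun q => (max (g q - A) 0) ^ 2) p - pdx (pdx (fun q => (max (g q - A) 0) ^ 2)) p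
        ≤ (1 / 2) * (b p) ^ 2 * (max (g p - A) 0) ^ 2 := by
  intro p hp hne
  set F : ℝ × ℝ → ℝ := fun q => (max (g q - A) 0) ^ 2 with hF
  have hgd : ∀ q ∈ U, DifferentiableAt ℝ g q := fun q hq =>
    ((hg.differentiableOn (by norm_num)).differentiableAt (hU.mem_nhds hq))
  have hgc : ContinuousAt g p := (hgd p hp).continuousAt
  -- slice derivatives of g
  have hx_slice : ∀ q ∈ U, HasDerivAt (fun x => g (q.1, x)) (fderiv ℝ g q (0, 1)) q.2 := by
    intro q hq
    have h1 : HasDerivAt (fun x : ℝ => ((q.1 : ℝ), x)) ((0 : ℝ), (1 : ℝ)) q.2 :=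
      HasDerivAt.prodMk (hasDerivAt_const _ _) (hasDerivAt_id _)
    exact ((hgd q hq).hasFDerivAt).comp_hasDerivAt q.2 h1
  have ht_slice : ∀ q ∈ U, HasDerivAt (fun t => g (t, q.2)) (fderiv ℝ g q (1, 0)) q.1 := by
    intro q hq
    have h1 : HasDerivAt (fun t : ℝ => (t, (q.2 : ℝ))) ((1 : ℝ), (0 : ℝ)) q.1 :=
      HasDerivAt.prodMk (hasDerivAt_id _) (hasDerivAt_const _ _)
    exact ((hgd q hq).hasFDerivAt).comp_hasDerivAt q.1 h1
  have hpdx_eq : ∀ q ∈ U, pdx g q = fderiv ℝ g q (0, 1) := fun q hq => (hx_slice q hq).deriv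
  have hpdt_eq : ∀ q ∈ U, pdt g q = fderiv ℝ g q (1, 0) := fun q hq => (ht_slice q hq).deriv
  have hx_slice' : ∀ q ∈ U, HasDerivAt (fun x => g (q.1, x)) (pdx g q) q.2 := by
    intro q hq; rw [hpdx_eq q hq]; exact hx_slice q hq
  have ht_slice' : ∀ q ∈ U, HasDerivAt (fun t => g (t, q.2)) (pdt g q) q.1 := by
    intro q hq; rw [hpdt_eq q hq]; exact ht_slice q hq
  -- differentiability of the x-partial of g in x at p
  have hfd : DifferentiableAt ℝ (fun q => fderiv ℝ g q) p :=
    ((hg.fderiv_of_isOpen (m := 1) hU (by norm_num)).differentiableOn one_ne_zero).differentiableAt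
      (hU.mem_nhds hp)
  have hcurve : DifferentiableAt ℝ (fun x : ℝ => ((p.1 : ℝ), x)) p.2 :=
    DifferentiableAt.prodMk (differentiableAt_const _) differentiableAt_id
  have h2d : DifferentiableAt ℝ (fun x => fderiv ℝ g (p.1, x) (0, 1)) p.2 :=
    ((hfd.comp p.2 hcurve).clm_apply (differentiableAt_const _))
  have hevU : ∀ᶠ x in nhds p.2, (p.1, x) ∈ U :=
    hcurve.continuousAt (hU.mem_nhds hp)
  have hpdxg_ev : (fun x => pdx g (p.1, x)) =ᶠ[nhds p.2] (fun x => fderiv ℝ g (p.1, x) (0, 1)) :=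
    hevU.mono fun x hx => hpdx_eq (p.1, x) hx
  have hpdxg_diff : DifferentiableAt ℝ (fun x => pdx g (p.1, x)) p.2 :=
    h2d.congr_of_eventuallyEq hpdxg_ev
  have hpdxg_hd : HasDerivAt (fun x => pdx g (p.1, x)) (pdx (pdx g) p) p.2 :=
    hpdxg_diff.hasDerivAt
  rcases lt_or_gt_of_ne hne with hlt | hgt
  · -- g p < A : F vanishes near p
    have hev : ∀ᶠ q in nhds p, g q < A ∧ q ∈ U := by
      filter_upwards [hgc.eventually (eventually_lt_nhds hlt), hU.mem_nhds hp] with q h1 h2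
      exact ⟨h1, h2⟩
    obtain ⟨V, hV, hVo, hpV⟩ := eventually_nhds_iff.mp hev
    have hF0 : ∀ q ∈ V, F q = 0 := by
      intro q hq
      have : g q - A ≤ 0 := sub_nonpos.mpr (hV q hq).1.le
      simp [hF, max_eq_right this]
    -- F is zero on a neighborhood of any point of V, in both slices
    have hFx0 : ∀ q ∈ V, pdx F q = 0 := by
      intro q hq
      have hcv : ContinuousAt (fun x : ℝ => ((q.1 : ℝ), x)) q.2 :=
        (continuousAt_const.prodMk continuousAt_id)
      have hevV : ∀ᶠ x in nhds q.2, (q.1, x) ∈ V := hcv (hVo.mem_nhds hq)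
      have he : (fun x => F (q.1, x)) =ᶠ[nhds q.2] (fun _ => (0 : ℝ)) :=
        hevV.mono fun x hx => hF0 _ hx
      have : deriv (fun x => F (q.1, x)) q.2 = deriv (fun _ : ℝ => (0 : ℝ)) q.2 :=
        he.deriv_eq
      simpa [pdx] using this
    have hevVx : ∀ᶠ x in nhds p.2, (p.1, x) ∈ V :=
      hcurve.continuousAt (hVo.mem_nhds hpV)
    have hevVt : ∀ᶠ t in nhds p.1, (t, p.2) ∈ V := by
      have hcv : ContinuousAt (fun t : ℝ => (t, (p.2 : ℝ))) p.1 :=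
        (continuousAt_id.prodMk continuousAt_const)
      exact hcv (hVo.mem_nhds hpV)
    have het : (fun t => (max (g (t, p.2) - A) 0) ^ 2) =ᶠ[nhds p.1] (fun _ => (0 : ℝ)) :=
      hevVt.mono fun t ht => hF0 _ ht
    have hex : (fun x => (max (g (p.1, x) - A) 0) ^ 2) =ᶠ[nhds p.2] (fun _ => (0 : ℝ)) :=
      hevVx.mono fun x hx => hF0 _ hx
    have hexx : (fun x => pdx F (p.1, x)) =ᶠ[nhds p.2] (fun _ => (0 : ℝ)) :=
      hevVx.mono fun x hx => hFx0 _ hx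
    refine ⟨⟨?_, ?_, ?_⟩, ?_⟩
    · exact (differentiableAt_const (0 : ℝ)).congr_of_eventuallyEq het
    · exact (differentiableAt_const (0 : ℝ)).congr_of_eventuallyEq hex
    · exact (differentiableAt_const (0 : ℝ)).congr_of_eventuallyEq hexx
    · have h1 : pdt F p = 0 := by
        have := het.deriv_eq
        simpa [pdt] using this
      have h2 : pdx (pdx F) p = 0 := by
        have := hexx.deriv_eq
        simpa [pdx] using this
      have h3 : max (g p - A) 0 = 0 := max_eq_right (sub_nonpos.mpr hlt.le)
      rw [h1, h2, h3]
      norm_num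
  · -- A < g p
    have hev : ∀ᶠ q in nhds p, A < g q ∧ q ∈ U := by
      filter_upwards [hgc.eventually (eventually_gt_nhds hgt), hU.mem_nhds hp] with q h1 h2
      exact ⟨h1, h2⟩
    obtain ⟨V, hV, hVo, hpV⟩ := eventually_nhds_iff.mp hev
    have hFeq : ∀ q ∈ V, F q = (g q - A) ^ 2 := by
      intro q hq
      have : (0 : ℝ) ≤ g q - A := sub_nonneg.mpr (hV q hq).1.le
      simp [hF, max_eq_left this]
    -- x-partial of F on V
    have hFx : ∀ q ∈ V, HasDerivAt (fun x => F (q.1, x)) (2 * (g q - A) * pdx g q) q.2 := by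
      intro q hq
      have hqU : q ∈ U := (hV q hq).2
      have hsl := hx_slice' q hqU
      have h1 : HasDerivAt (fun x => (g (q.1, x) - A) ^ 2)
          (2 * (g q - A) * pdx g q) q.2 := by
        have := (hsl.sub_const A).fun_pow 2
        simpa using this
      have hcv : ContinuousAt (fun x : ℝ => ((q.1 : ℝ), x)) q.2 :=
        (continuousAt_const.prodMk continuousAt_id)
      have hevV : ∀ᶠ x in nhds q.2, (q.1, x) ∈ V := hcv (hVo.mem_nhds hq)
      exact h1.congr_of_eventuallyEq (hevV.mono fun x hx => hFeq _ hx)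
    have hpdxF : ∀ q ∈ V, pdx F q = 2 * (g q - A) * pdx g q := fun q hq => (hFx q hq).deriv
    -- t-partial of F at p
    have hFt : HasDerivAt (fun t => F (t, p.2)) (2 * (g p - A) * pdt g p) p.1 := by
      have hsl := ht_slice' p hp
      have h1 : HasDerivAt (fun t => (g (t, p.2) - A) ^ 2)
          (2 * (g p - A) * pdt g p) p.1 := by
        have := (hsl.sub_const A).fun_pow 2
        simpa using this
      have hcv : ContinuousAt (fun t : ℝ => (t, (p.2 : ℝ))) p.1 :=
        (continuousAt_id.prodMk continuousAt_const)
      have hevV : ∀ᶠ t in nhds p.1, (t, p.2) ∈ V := hcv (hVo.mem_nhds hpV)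
      exact h1.congr_of_eventuallyEq (hevV.mono fun t ht => hFeq _ ht)
    -- second x-derivative of F at p
    have hslp := hx_slice' p hp
    have hRHS : HasDerivAt (fun x => 2 * (g (p.1, x) - A) * pdx g (p.1, x))
        ((2 * pdx g p) * pdx g p + (2 * (g p - A)) * pdx (pdx g) p) p.2 := by
      have hc : HasDerivAt (fun x => 2 * (g (p.1, x) - A)) (2 * pdx g p) p.2 :=
        (hslp.sub_const A).const_mul 2
      exact hc.mul hpdxg_hd
    have hevVx : ∀ᶠ x in nhds p.2, (p.1, x) ∈ V :=
      hcurve.continuousAt (hVo.mem_nhds hpV)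
    have hFxx : HasDerivAt (fun x => pdx F (p.1, x))
        ((2 * pdx g p) * pdx g p + (2 * (g p - A)) * pdx (pdx g) p) p.2 :=
      hRHS.congr_of_eventuallyEq (hevVx.mono fun x hx => hpdxF _ hx)
    refine ⟨⟨hFt.differentiableAt, (hFx p hpV).differentiableAt, hFxx.differentiableAt⟩, ?_⟩
    have h1 : pdt F p = 2 * (g p - A) * pdt g p := hFt.deriv
    have h2 : pdx (pdx F) p = (2 * pdx g p) * pdx g p + (2 * (g p - A)) * pdx (pdx g) p :=
      hFxx.deriv
    have h3 : max (g p - A) 0 = g p - A := max_eq_left (sub_nonneg.mpr hgt.le)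
    rw [h1, h2, h3]
    have hY := hgineq p hp
    nlinarith [sq_nonneg (b p * (g p - A) - 2 * pdx g p),
      mul_le_mul_of_nonneg_left hY (by linarith : (0 : ℝ) ≤ 2 * (g p - A))]
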